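/- Let f_1, ..., f_N be unit vectors in C^d (or R^d) with d ≤ N. Then the frame potential FP = Σ_{i=1}^N Σ_{j=1}^N |⟨f_i, f_j⟩|^2 satisfies FP ≥ N^2/d, with equality if and only if the vectors form a unit norm tight frame, i.e., the synthesis operator F (the d×N matrix with columns f_i) satisfies F F* = (N/d) I. -/

import Mathlib

open Finset

namespace FramePotentialAux

noncomputable def T {d N : ℕ} (f : Fin N → EuclideanSpace ℂ (Fin d)) (k l : Fin d) : ℂ :=
  ∑ i, (starRingEnd ℂ) (f i k) * f i l

variable {d N : ℕ} (f : Fin N → EuclideanSpace ℂ (Fin d))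

lemma normSq_eq (z : ℂ) : ‖z‖ ^ 2 = (z * (starRingEnd ℂ) z).re := by
  rw [Complex.mul_conj]
  simp [Complex.sq_norm]

lemma T_herm (k l : Fin d) : T f l k = (starRingEnd ℂ) (T f k l) := by
  simp [T, map_mul, mul_comm]

lemma T_diag (k : Fin d) : T f k k = (((T f k k).re : ℝ) : ℂ) := by
  have : T f k k = ((∑ i, ‖f i k‖ ^ 2 : ℝ) : ℂ) := by
    simp [T, Complex.conj_mul']
  rw [this, Complex.ofReal_re]

lemma norm_sq_eq_sum (x : EuclideanSpace ℂ (Fin d)) : ‖x‖ ^ 2 = ∑ k, ‖x k‖ ^ 2 := by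
  rw [EuclideanSpace.norm_eq, Real.sq_sqrt]
  positivity

def swap4 {α β : Type*} : (β × β × α × α) ≃ (α × α × β × β) where
  toFun x := (x.2.2.1, x.2.2.2, x.1, x.2.1)
  invFun x := (x.2.2.1, x.2.2.2, x.1, x.2.1)
  left_inv _ := rfl
  right_inv _ := rfl

lemma sum_swap4 {α β : Type*} [Fintype α] [Fintype β] (h : α → α → β → β → ℂ) :
    ∑ k : β, ∑ l : β, ∑ i : α, ∑ j : α, h i j k l
      = ∑ i : α, ∑ j : α, ∑ k : β, ∑ l : β, h i j k l := by
  have key : ∑ x : β × β × α × α, h x.2.2.1 x.2.2.2 x.1 x.2.1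
      = ∑ x : α × α × β × β, h x.1 x.2.1 x.2.2.1 x.2.2.2 :=
    Fintype.sum_equiv swap4 _ _ (fun x => rfl)
  simpa [Fintype.sum_prod_type] using key

lemma FP_eq : ∑ i, ∑ j, (inner ℂ (f i) (f j) : ℂ) * (starRingEnd ℂ) (inner ℂ (f i) (f j) : ℂ)
    = ∑ k, ∑ l, T f k l * (starRingEnd ℂ) (T f k l) := by
  simp only [T, PiLp.inner_apply, RCLike.inner_apply, map_sum, map_mul,
    RingHomCompTriple.comp_apply, Complex.conj_conj, Finset.sum_mul_sum]
  rw [sum_swap4]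
  refine Finset.sum_congr rfl fun i _ => Finset.sum_congr rfl fun j _ =>
    Finset.sum_congr rfl fun k _ => Finset.sum_congr rfl fun l _ => ?_
  simp only [RingHom.id_apply]
  ring

lemma Q_eq (x : EuclideanSpace ℂ (Fin d)) :
    ∑ i, (inner ℂ (f i) x : ℂ) * (starRingEnd ℂ) (inner ℂ (f i) x : ℂ)
    = ∑ k, ∑ l, T f k l * (x k * (starRingEnd ℂ) (x l)) := by
  simp only [T, PiLp.inner_apply, RCLike.inner_apply, map_sum, map_mul,
    RingHomCompTriple.comp_apply, Complex.conj_conj, Finset.sum_mul_sum,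
    Finset.sum_mul, Finset.mul_sum]
  conv_rhs => rw [Finset.sum_comm]
  rw [Finset.sum_comm]
  refine Finset.sum_congr rfl fun k _ => ?_
  rw [Finset.sum_comm]
  refine Finset.sum_congr rfl fun l _ => Finset.sum_congr rfl fun i _ => ?_
  simp only [RingHom.id_apply]
  ring

lemma FP_real : ∑ i, ∑ j, ‖(inner ℂ (f i) (f j) : ℂ)‖ ^ 2 = ∑ k, ∑ l, ‖T f k l‖ ^ 2 := by
  have h1 : ∑ i, ∑ j, ‖(inner ℂ (f i) (f j) : ℂ)‖ ^ 2
      = (∑ i, ∑ j, (inner ℂ (f i) (f j) : ℂ) * (starRingEnd ℂ) (inner ℂ (f i) (f j) : ℂ)).re := by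
    simp only [Complex.re_sum]
    exact Finset.sum_congr rfl fun i _ => Finset.sum_congr rfl fun j _ => normSq_eq _
  have h2 : ∑ k, ∑ l, ‖T f k l‖ ^ 2 = (∑ k, ∑ l, T f k l * (starRingEnd ℂ) (T f k l)).re := by
    simp only [Complex.re_sum]
    exact Finset.sum_congr rfl fun k _ => Finset.sum_congr rfl fun l _ => normSq_eq _
  rw [h1, h2, FP_eq]

lemma Q_real (x : EuclideanSpace ℂ (Fin d)) :
    ∑ i, ‖(inner ℂ (f i) x : ℂ)‖ ^ 2
      = (∑ k, ∑ l, T f k l * (x k * (starRingEnd ℂ) (x l))).re := by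
  have h1 : ∑ i, ‖(inner ℂ (f i) x : ℂ)‖ ^ 2
      = (∑ i, (inner ℂ (f i) x : ℂ) * (starRingEnd ℂ) (inner ℂ (f i) x : ℂ)).re := by
    simp only [Complex.re_sum]
    exact Finset.sum_congr rfl fun i _ => normSq_eq _
  rw [h1, Q_eq]

lemma trace_T (hnorm : ∀ i, ‖f i‖ = 1) : ∑ k, (T f k k).re = (N : ℝ) := by
  have h1 : ∀ k, (T f k k).re = ∑ i, ‖f i k‖ ^ 2 := by
    intro k
    simp [T, Complex.re_sum, Complex.conj_mul',
      ← Complex.ofReal_pow, Complex.ofReal_re]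
  rw [Finset.sum_congr rfl fun k _ => h1 k, Finset.sum_comm]
  have h2 : ∀ i : Fin N, ∑ k, ‖f i k‖ ^ 2 = 1 := by
    intro i
    rw [← norm_sq_eq_sum, hnorm i, one_pow]
  rw [Finset.sum_congr rfl fun i _ => h2 i]
  simp

lemma sum_single (M : Fin d → Fin d → ℂ) (p : Fin d) :
    ∑ k, ∑ l, M k l * ((EuclideanSpace.single p (1:ℂ)) k
      * (starRingEnd ℂ) ((EuclideanSpace.single p (1:ℂ)) l)) = M p p := by
  simp [EuclideanSpace.single_apply, apply_ite (starRingEnd ℂ), mul_ite, ite_mul,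
    Finset.sum_ite_eq', Finset.mem_univ]

lemma sum_pair (M : Fin d → Fin d → ℂ) (p q : Fin d) (a : ℂ) :
    ∑ k, ∑ l, M k l * ((EuclideanSpace.single p (1:ℂ) + EuclideanSpace.single q a) k
      * (starRingEnd ℂ) ((EuclideanSpace.single p (1:ℂ) + EuclideanSpace.single q a) l))
    = M p p + M p q * (starRingEnd ℂ) a + M q p * a + M q q * (a * (starRingEnd ℂ) a) := by
  simp [PiLp.add_apply, EuclideanSpace.single_apply, apply_ite (starRingEnd ℂ), mul_ite, ite_mul,
    mul_add, add_mul, Finset.sum_add_distrib, Finset.sum_ite_eq', Finset.mem_univ]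
  ring

lemma norm_pair (p q : Fin d) (hpq : p ≠ q) (a : ℂ) :
    ‖(EuclideanSpace.single p (1:ℂ) + EuclideanSpace.single q a)‖ ^ 2 = 1 + ‖a‖ ^ 2 := by
  rw [EuclideanSpace.norm_eq, Real.sq_sqrt (by positivity)]
  have h : ∀ k, ‖(EuclideanSpace.single p (1:ℂ) + EuclideanSpace.single q a) k‖ ^ 2
      = (if k = p then (1:ℝ) else 0) + (if k = q then ‖a‖ ^ 2 else 0) := by
    intro k
    by_cases h1 : k = p <;> by_cases h2 : k = q <;>
      simp [PiLp.add_apply, EuclideanSpace.single_apply, h1, h2, hpq] <;>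
      simp_all
  rw [Finset.sum_congr rfl (fun k _ => h k)]
  simp [Finset.sum_add_distrib, Finset.sum_ite_eq', Finset.mem_univ]

end FramePotentialAux

open FramePotentialAux

set_option maxHeartbeats 1000000 in
/-- The frame potential `Σᵢ Σⱼ |⟨fᵢ, fⱼ⟩|²` of `N ≥ d` unit vectors in `ℂ^d` is at least
`N²/d`, with equality if and only if the vectors form a unit norm tight frame
(frame bound `N/d`). -/
theorem frame_potential_ge_and_eq_iff_tight (d N : ℕ) (hd : 0 < d) (hN : d ≤ N)
    (f : Fin N → EuclideanSpace ℂ (Fin d)) (hnorm : ∀ i, ‖f i‖ = 1) :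
    (N : ℝ) ^ 2 / d ≤ ∑ i : Fin N, ∑ j : Fin N, ‖(inner ℂ (f i) (f j) : ℂ)‖ ^ 2 ∧
    ((∑ i : Fin N, ∑ j : Fin N, ‖(inner ℂ (f i) (f j) : ℂ)‖ ^ 2 = (N : ℝ) ^ 2 / d) ↔
      (∀ x : EuclideanSpace ℂ (Fin d),
        ∑ i : Fin N, ‖(inner ℂ (f i) x : ℂ)‖ ^ 2 = ((N : ℝ) / d) * ‖x‖ ^ 2)) := by
  have hd' : (d : ℝ) ≠ 0 := Nat.cast_ne_zero.mpr hd.ne'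
  set c : ℝ := (N : ℝ) / d with hc
  -- diagonal norms as squares of real parts
  have hnorm_diag : ∀ k, ‖T f k k‖ ^ 2 = ((T f k k).re) ^ 2 := by
    intro k
    conv_lhs => rw [T_diag f k]
    simp [Complex.norm_real, Real.norm_eq_abs, sq_abs]
  -- split into diagonal and off-diagonal
  have hsplit : ∑ k, ∑ l, ‖T f k l‖ ^ 2
      = (∑ k, ∑ l ∈ Finset.univ.erase k, ‖T f k l‖ ^ 2) + ∑ k, ((T f k k).re) ^ 2 := by
    rw [← Finset.sum_add_distrib]
    refine Finset.sum_congr rfl fun k _ => ?_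
    rw [← hnorm_diag k, Finset.sum_erase_add _ _ (Finset.mem_univ k)]
  -- diagonal sum identity
  have htr := trace_T f hnorm
  have hdiagsum : ∑ k, ((T f k k).re) ^ 2
      = (∑ k, ((T f k k).re - c) ^ 2) + (N : ℝ) ^ 2 / d := by
    have hexp : ∑ k, ((T f k k).re - c) ^ 2
        = (∑ k, ((T f k k).re) ^ 2) - 2 * c * (∑ k, (T f k k).re) + d * c ^ 2 := by
      simp only [sub_sq, Finset.sum_add_distrib, Finset.sum_sub_distrib, ← Finset.sum_mul,
        ← Finset.mul_sum, Finset.sum_const, Finset.card_univ, Fintype.card_fin, nsmul_eq_mul]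
      ring
    rw [hexp, htr, hc]
    field_simp
    ring
  have hFPr := FP_real f
  have hoff : 0 ≤ ∑ k, ∑ l ∈ Finset.univ.erase k, ‖T f k l‖ ^ 2 := by positivity
  have hdd : 0 ≤ ∑ k, ((T f k k).re - c) ^ 2 := by positivity
  have hineq : (N : ℝ) ^ 2 / d ≤ ∑ i : Fin N, ∑ j : Fin N, ‖(inner ℂ (f i) (f j) : ℂ)‖ ^ 2 := by
    rw [hFPr, hsplit, hdiagsum]; linarith
  refine ⟨hineq, ?_, ?_⟩
  · -- equality → tight
    intro heq
    rw [hFPr, hsplit, hdiagsum] at heq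
    have hoff0 : ∑ k, ∑ l ∈ Finset.univ.erase k, ‖T f k l‖ ^ 2 = 0 := by linarith
    have hdd0 : ∑ k, ((T f k k).re - c) ^ 2 = 0 := by linarith
    have hT0 : ∀ k l, k ≠ l → T f k l = 0 := by
      intro k l hkl
      have h1 := (Finset.sum_eq_zero_iff_of_nonneg (fun k _ => by positivity)).mp hoff0 k
        (Finset.mem_univ k)
      have h2 := (Finset.sum_eq_zero_iff_of_nonneg (fun l _ => by positivity)).mp h1 l
        (Finset.mem_erase.mpr ⟨fun h => hkl h.symm, Finset.mem_univ l⟩)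
      have := pow_eq_zero_iff (n := 2) (by norm_num) |>.mp h2
      exact norm_eq_zero.mp this
    have hTd : ∀ k, T f k k = (c : ℂ) := by
      intro k
      have h1 := (Finset.sum_eq_zero_iff_of_nonneg (fun k _ => by positivity)).mp hdd0 k
        (Finset.mem_univ k)
      have h2 : (T f k k).re = c := by
        have := pow_eq_zero_iff (n := 2) (by norm_num) |>.mp h1
        linarith
      rw [T_diag f k, h2]
    have hTall : ∀ k l, T f k l = if k = l then (c : ℂ) else 0 := by
      intro k l
      by_cases h : k = l
      · subst h; simp [hTd k]
      · simp [h, hT0 k l h]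
    intro x
    rw [Q_real f x]
    have hrow : ∀ k, ∑ l, T f k l * (x k * (starRingEnd ℂ) (x l))
        = (c : ℂ) * (x k * (starRingEnd ℂ) (x k)) := by
      intro k
      rw [Finset.sum_congr rfl fun l _ => by rw [hTall k l]]
      simp [ite_mul, Finset.sum_ite_eq, Finset.mem_univ]
    rw [Finset.sum_congr rfl fun k _ => hrow k]
    rw [norm_sq_eq_sum]
    simp only [Complex.re_sum, Complex.ofReal_mul]
    rw [Finset.mul_sum]
    refine Finset.sum_congr rfl fun k _ => ?_
    rw [Complex.re_ofReal_mul, ← normSq_eq]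
  · -- tight → equality
    intro htight
    -- diagonal entries
    have hTd : ∀ p, T f p p = (c : ℂ) := by
      intro p
      have h := htight (EuclideanSpace.single p (1 : ℂ))
      rw [Q_real f _, sum_single (T f) p] at h
      have hn : ‖EuclideanSpace.single p (1 : ℂ)‖ = 1 := by
        simp [EuclideanSpace.norm_single]
      rw [hn, one_pow, mul_one] at h
      rw [T_diag f p, h]
    -- off-diagonal entries vanish
    have hT0 : ∀ p q, p ≠ q → T f p q = 0 := by
      intro p q hpq
      have hherm : T f q p = (starRingEnd ℂ) (T f p q) := T_herm f p q
      have h1 := htight (EuclideanSpace.single p (1 : ℂ) + EuclideanSpace.single q (1 : ℂ))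
      rw [Q_real f _, sum_pair (T f) p q 1, norm_pair p q hpq 1] at h1
      have h2 := htight (EuclideanSpace.single p (1 : ℂ) + EuclideanSpace.single q Complex.I)
      rw [Q_real f _, sum_pair (T f) p q Complex.I, norm_pair p q hpq Complex.I] at h2
      have hre : (T f p q).re = 0 := by
        simp [hTd p, hTd q, hherm, Complex.add_re, Complex.ofReal_re] at h1
        linarith
      have him : (T f p q).im = 0 := by
        simp [hTd p, hTd q, hherm, Complex.add_re, Complex.mul_re, Complex.I_re, Complex.I_im,
          Complex.conj_re, Complex.conj_im, Complex.norm_I] at h2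
        linarith
      exact Complex.ext hre him
    have hTall : ∀ k l, T f k l = if k = l then (c : ℂ) else 0 := by
      intro k l
      by_cases h : k = l
      · subst h; simp [hTd k]
      · simp [h, hT0 k l h]
    rw [hFPr]
    have hrow : ∀ k, ∑ l, ‖T f k l‖ ^ 2 = c ^ 2 := by
      intro k
      have hcnn : (0:ℝ) ≤ c := by positivity
      have hpt : ∀ l, ‖T f k l‖ ^ 2 = if k = l then c ^ 2 else 0 := by
        intro l
        rw [hTall k l]
        by_cases h : k = l <;>
          simp [h, Complex.norm_real, Real.norm_eq_abs, abs_of_nonneg hcnn]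
      rw [Finset.sum_congr rfl fun l _ => hpt l]
      simp [Finset.sum_ite_eq]
    rw [Finset.sum_congr rfl fun k _ => hrow k]
    simp only [Finset.sum_const, Finset.card_univ, Fintype.card_fin, nsmul_eq_mul, hc]
    field_simp
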